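/- Let p > 1 and let η, ξ ∈ ℝ be real numbers. Then (|η − ξ|^{p−2}(η − ξ) + |ξ|^{p−2}ξ) = (p−1) η ∫₀¹ |tη − ξ|^{p−2} dt, where for 1 < p < 2 the integrand is extended by 0 at any t with tη = ξ (the integral is finite since p − 2 > −1). -/

import Mathlib

open MeasureTheory Set Real

lemma abs_rpow_intervalIntegrable {r : ℝ} (h : -1 < r) (a b : ℝ) :
    IntervalIntegrable (fun x : ℝ => |x| ^ r) volume a b := by
  have key : ∀ c : ℝ, 0 ≤ c → IntervalIntegrable (fun x : ℝ => |x| ^ r) volume 0 c := by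
    intro c hc
    rw [intervalIntegrable_iff, uIoc_of_le hc]
    have m := intervalIntegral.intervalIntegrable_rpow' (a := 0) (b := c) h
    rw [intervalIntegrable_iff, uIoc_of_le hc] at m
    exact m.congr_fun (fun x hx => by rw [abs_of_pos hx.1]) measurableSet_Ioc
  have key2 : ∀ c : ℝ, IntervalIntegrable (fun x : ℝ => |x| ^ r) volume 0 c := by
    intro c
    rcases le_total 0 c with hc | hc
    · exact key c hc
    · rw [IntervalIntegrable.iff_comp_neg]
      simp only [abs_neg, neg_zero]
      exact key (-c) (by linarith)
  exact (key2 a).symm.trans (key2 b)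

lemma G_norm_eq {p : ℝ} (hp : 1 < p) {x : ℝ} (hx : x ≠ 0) :
    ‖|x| ^ (p - 2) * x‖ = |x| ^ (p - 1) := by
  have hsplit : p - 1 = (p - 2) + 1 := by ring
  rw [norm_mul, Real.norm_eq_abs, Real.norm_eq_abs,
    abs_of_nonneg (Real.rpow_nonneg (abs_nonneg x) _), hsplit,
    Real.rpow_add (abs_pos.2 hx), Real.rpow_one]

lemma G_hasDerivAt {p : ℝ} (hp : 1 < p) {u : ℝ} (hu : u ≠ 0) :
    HasDerivAt (fun x : ℝ => |x| ^ (p - 2) * x) ((p - 1) * |u| ^ (p - 2)) u := by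
  have hsplit : p - 1 = (p - 2) + 1 := by ring
  rcases hu.lt_or_gt with h | h
  · have hpos : (0:ℝ) < -u := by linarith
    have h1 : HasDerivAt (fun x : ℝ => -((-x) ^ (p - 1))) ((p - 1) * (-u) ^ (p - 2)) u := by
      have h2 : HasDerivAt (fun y : ℝ => y ^ (p - 1)) ((p - 1) * (-u) ^ (p - 2)) (-u) := by
        simpa [show p - 1 - 1 = p - 2 from by ring]
          using Real.hasDerivAt_rpow_const (x := -u) (p := p - 1) (Or.inl hpos.ne')
      have h3 : HasDerivAt (fun x : ℝ => (-x) ^ (p - 1))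
          ((p - 1) * (-u) ^ (p - 2) * (-1)) u := h2.comp u (hasDerivAt_neg u)
      simpa [Pi.neg_def] using h3.neg
    rw [abs_of_neg h]
    refine h1.congr_of_eventuallyEq ?_
    filter_upwards [eventually_lt_nhds h] with x hx
    rw [abs_of_neg hx, hsplit, Real.rpow_add (by linarith : (0:ℝ) < -x), Real.rpow_one]
    ring
  · have h1 : HasDerivAt (fun x : ℝ => x ^ (p - 1)) ((p - 1) * u ^ (p - 2)) u := by
      simpa [show p - 1 - 1 = p - 2 from by ring]
        using Real.hasDerivAt_rpow_const (x := u) (p := p - 1) (Or.inl h.ne')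
    rw [abs_of_pos h]
    refine h1.congr_of_eventuallyEq ?_
    filter_upwards [eventually_gt_nhds h] with x hx
    rw [abs_of_pos hx, hsplit, Real.rpow_add hx, Real.rpow_one]

lemma G_continuous {p : ℝ} (hp : 1 < p) :
    Continuous (fun x : ℝ => |x| ^ (p - 2) * x) := by
  rw [continuous_iff_continuousAt]
  intro u
  rcases eq_or_ne u 0 with rfl | hu
  · have hb : ∀ x : ℝ, ‖|x| ^ (p - 2) * x‖ ≤ |x| ^ (p - 1) := by
      intro x
      rcases eq_or_ne x 0 with rfl | hx
      · simp [Real.zero_rpow (by intro hc; linarith [hc] : p - 1 ≠ 0)]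
      · rw [G_norm_eq hp hx]
    have htend : Filter.Tendsto (fun x : ℝ => |x| ^ (p - 1)) (nhds 0) (nhds 0) := by
      have hg : ContinuousAt (fun x : ℝ => x ^ (p - 1)) |(0:ℝ)| := by
        rw [abs_zero]; exact Real.continuousAt_rpow_const 0 (p - 1) (Or.inr (by linarith))
      have hc := hg.comp (continuous_abs.continuousAt (x := (0:ℝ)))
      simpa [ContinuousAt, Function.comp_def, Real.zero_rpow (by intro hc; linarith [hc] : p - 1 ≠ 0)]
        using hc
    have := squeeze_zero_norm hb htend
    simpa [ContinuousAt] using this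
  · exact (G_hasDerivAt hp hu).continuousAt

/-- The one-dimensional exact mean value identity for the translated p-Laplacian
nonlinearity: for real numbers `η, ξ`,
`|η−ξ|^{p−2}(η−ξ) + |ξ|^{p−2}ξ = (p−1) η ∫₀¹ |tη − ξ|^{p−2} dt`
(for `1 < p < 2` the integrand is extended by `0` at any `t` with `tη = ξ`). -/
theorem scalar_phi_mean_value_identity (p : ℝ) (hp : 1 < p) (η ξ : ℝ) :
    |η - ξ| ^ (p - 2) * (η - ξ) + |ξ| ^ (p - 2) * ξ
      = (p - 1) * η * ∫ t in (0 : ℝ)..1, |t * η - ξ| ^ (p - 2) := by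
  rcases eq_or_ne η 0 with rfl | hη
  · simp only [zero_sub, abs_neg, mul_zero, zero_mul]
    ring
  set G : ℝ → ℝ := fun x => |x| ^ (p - 2) * x with hG
  set F : ℝ → ℝ := fun t => G (t * η - ξ) with hF
  set f : ℝ → ℝ := fun t => |t * η - ξ| ^ (p - 2) with hf
  have hint : ∀ a b : ℝ, IntervalIntegrable f volume a b := by
    intro a b
    have H0 := abs_rpow_intervalIntegrable (r := p - 2) (by linarith) (a * η - ξ) (b * η - ξ)
    have H1 := H0.comp_sub_right ξ
    rw [sub_add_cancel, sub_add_cancel] at H1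
    have H2 := H1.comp_mul_right (c := η)
    rwa [mul_div_cancel_right₀ _ hη, mul_div_cancel_right₀ _ hη] at H2
  have hFderiv : ∀ t : ℝ, t * η - ξ ≠ 0 →
      HasDerivAt F ((p - 1) * η * f t) t := by
    intro t ht
    have hinner : HasDerivAt (fun t : ℝ => t * η - ξ) η t := by
      simpa using ((hasDerivAt_id t).mul_const η).sub_const ξ
    have h2 := (G_hasDerivAt hp ht).comp t hinner
    have h3 : (p - 1) * η * f t = (p - 1) * |t * η - ξ| ^ (p - 2) * η := by
      rw [hf]; ring
    rw [h3]
    exact h2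
  have hFcont : Continuous F :=
    (G_continuous hp).comp (by continuity)
  have key : ∀ a b : ℝ, a ≤ b → (∀ t ∈ Ioo a b, t * η - ξ ≠ 0) →
      ∫ t in a..b, (p - 1) * η * f t = F b - F a := by
    intro a b hab hne
    refine intervalIntegral.integral_eq_sub_of_hasDeriv_right_of_le hab
      hFcont.continuousOn (fun t ht => ((hFderiv t (hne t ht)).hasDerivWithinAt)) ?_
    exact (hint a b).const_mul _
  have hmain : ∫ t in (0:ℝ)..1, (p - 1) * η * f t = F 1 - F 0 := by
    by_cases hc : ξ / η ∈ Ioo (0:ℝ) 1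
    · have e1 := key 0 (ξ / η) hc.1.le (fun t ht => by
        intro h
        have : t = ξ / η := by field_simp [sub_eq_zero] at h ⊢; linarith [h]
        exact absurd this ht.2.ne)
      have e2 := key (ξ / η) 1 hc.2.le (fun t ht => by
        intro h
        have : t = ξ / η := by field_simp [sub_eq_zero] at h ⊢; linarith [h]
        exact absurd this ht.1.ne')
      rw [← intervalIntegral.integral_add_adjacent_intervals
        ((hint 0 (ξ / η)).const_mul _) ((hint (ξ / η) 1).const_mul _), e1, e2]
      ring
    · exact key 0 1 zero_le_one (fun t ht h => hc (by
        have : t = ξ / η := by field_simp [sub_eq_zero] at h ⊢; linarith [h]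
        rwa [← this]))
  rw [intervalIntegral.integral_const_mul] at hmain
  rw [hmain]
  simp only [hF, hG, one_mul, zero_mul, zero_sub, abs_neg]
  ring
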